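/- Let n ≥ 2 be a natural number. The n-th Kolmogorov number of the summation operator σ : ℓ¹ → c equals 1/2, i.e., the infimum over all subspaces N of c with dimension < n of sup{inf{‖σ(x) − y‖_∞ : y ∈ N} : ‖x‖₁ ≤ 1} equals 1/2. -/

import Mathlib

noncomputable section

/-- The space `ℓ¹` of absolutely summable real sequences. -/
abbrev ell1 : Type := lp (fun _ : ℕ => ℝ) 1

/-- The space `ℓ^∞` of bounded real sequences with the supremum norm. -/
abbrev ellInf : Type := lp (fun _ : ℕ => ℝ) ⊤

/-- The subspace of `ℓ^∞` consisting of convergent sequences. -/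
def convSubspace : Submodule ℝ ellInf where
  carrier := {x | ∃ L : ℝ, Filter.Tendsto (fun k => x k) Filter.atTop (nhds L)}
  add_mem' := by
    rintro x y ⟨L, hL⟩ ⟨M, hM⟩
    exact ⟨L + M, by simpa [lp.coeFn_add, Pi.add_apply] using hL.add hM⟩
  zero_mem' :=
    ⟨0, by simpa [lp.coeFn_zero] using
      (tendsto_const_nhds : Filter.Tendsto (fun _ : ℕ => (0:ℝ)) _ _)⟩
  smul_mem' := by
    rintro c x ⟨L, hL⟩
    exact ⟨c * L, by simpa [lp.coeFn_smul, Pi.smul_apply, smul_eq_mul] using hL.const_mul c⟩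

/-- The space `c` of convergent real sequences, normed by the supremum norm. -/
abbrev cSpace : Type := ↥convSubspace

/-- `σ` is the summation operator: `σ(x)ₖ = ∑_{j=1}^k x_j` (`0`-indexed here). -/
def IsSummation (σ : ell1 →L[ℝ] cSpace) : Prop :=
  ∀ x : ell1, ∀ k : ℕ, (↑(σ x) : ellInf) k = ∑ j ∈ Finset.range (k + 1), x j

namespace KNS

lemma cnorm (y : cSpace) : ‖y‖ = ‖(y : ellInf)‖ := rfl

lemma sum_abs_le (x : ell1) (s : Finset ℕ) : ∑ j ∈ s, |x j| ≤ ‖x‖ := by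
  have := lp.sum_rpow_le_norm_rpow (p := 1) (by norm_num) x s
  simpa using this

lemma summable_abs (x : ell1) : Summable fun j => |x j| := by
  have h := lp.memℓp x
  rw [memℓp_gen_iff (by norm_num : (0:ℝ) < (1:ENNReal).toReal)] at h
  simpa using h

lemma norm_eq_tsum (x : ell1) : ‖x‖ = ∑' j, |x j| := by
  have := lp.norm_eq_tsum_rpow (p := 1) (by norm_num) x
  simpa using this

lemma apply_le_cnorm (y : cSpace) (k : ℕ) : |(y : ellInf) k| ≤ ‖y‖ := by
  rw [cnorm, ← Real.norm_eq_abs]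
  exact lp.norm_apply_le_norm ENNReal.top_ne_zero (y : ellInf) k

lemma sub_apply (a b : cSpace) (k : ℕ) :
    ((↑(a - b) : ellInf)) k = (a : ellInf) k - (b : ellInf) k := by
  have : ((↑(a - b) : ellInf)) = (a : ellInf) - (b : ellInf) := rfl
  rw [this]
  simp [lp.coeFn_sub]

lemma norm_sigma_le {σ : ell1 →L[ℝ] cSpace} (hσ : IsSummation σ) (x : ell1) :
    ‖σ x‖ ≤ ‖x‖ := by
  rw [cnorm]
  refine lp.norm_le_of_forall_le (norm_nonneg x) fun k => ?_
  rw [Real.norm_eq_abs, hσ x k]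
  exact le_trans (Finset.abs_sum_le_sum_abs _ _) (sum_abs_le x _)

end KNS

namespace KNS

open Filter Topology

/-- the canonical basis vectors in ℓ¹ -/
def e (j : ℕ) : ell1 := lp.single 1 j (1 : ℝ)

lemma norm_e (j : ℕ) : ‖e j‖ = 1 := by
  have := lp.norm_single (p := 1) (E := fun _ : ℕ => ℝ) (by norm_num) j (1:ℝ)
  simpa [e] using this

lemma sigma_e_apply {σ : ell1 →L[ℝ] cSpace} (hσ : IsSummation σ) (j k : ℕ) :
    (↑(σ (e j)) : ellInf) k = if j ≤ k then 1 else 0 := by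
  rw [hσ (e j) k]
  have h : ∀ i : ℕ, (e j) i = if i = j then (1:ℝ) else 0 := by
    intro i
    by_cases hij : i = j
    · subst hij; simp [e, lp.single_apply_self]
    · rw [if_neg hij]; exact lp.single_apply_ne 1 j _ hij
  rw [Finset.sum_congr rfl fun i _ => h i]
  rw [Finset.sum_ite_eq' (Finset.range (k+1)) j fun _ => (1:ℝ)]
  simp [Nat.lt_succ_iff]

/-- the constant 1 sequence in c -/
def oneInf : ellInf :=
  ⟨fun _ => (1:ℝ), memℓp_infty ⟨1, by rintro r ⟨i, rfl⟩; simp⟩⟩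

lemma oneInf_apply (k : ℕ) : (oneInf : ∀ _ : ℕ, ℝ) k = 1 := rfl

def oneC : cSpace := ⟨oneInf, ⟨1, by simpa [oneInf_apply] using (tendsto_const_nhds :
  Filter.Tendsto (fun _ : ℕ => (1:ℝ)) Filter.atTop (nhds 1))⟩⟩

lemma smul_oneC_apply (c : ℝ) (k : ℕ) : (↑(c • oneC) : ellInf) k = c := by
  have h1 : (↑(c • oneC) : ellInf) = c • (oneC : ellInf) := rfl
  rw [h1, lp.coeFn_smul]
  simp [oneC, oneInf_apply]

/-- limits are 1-Lipschitz w.r.t. sup norm distance -/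
lemma abs_lim_sub_le (y z : cSpace) {L M : ℝ}
    (hL : Filter.Tendsto (fun k => (y : ellInf) k) Filter.atTop (nhds L))
    (hM : Filter.Tendsto (fun k => (z : ellInf) k) Filter.atTop (nhds M)) :
    |L - M| ≤ ‖y - z‖ := by
  have ht : Filter.Tendsto (fun k => |(y : ellInf) k - (z : ellInf) k|)
      Filter.atTop (nhds |L - M|) := ((hL.sub hM).abs)
  refine le_of_tendsto ht (Filter.Eventually.of_forall fun k => ?_)
  have := apply_le_cnorm (y - z) k
  rwa [sub_apply] at this

variable {σ : ell1 →L[ℝ] cSpace}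

lemma upper_bound (hσ : IsSummation σ) (x : ell1) (hx : ‖x‖ ≤ 1) :
    ∃ c : ℝ, ‖σ x - c • oneC‖ ≤ 1/2 := by
  classical
  set P := ∑' j, max (x j) 0 with hP
  set Q := ∑' j, max (-(x j)) 0 with hQ
  have hsum := summable_abs x
  have hPs : Summable fun j => max (x j) 0 :=
    hsum.of_nonneg_of_le (fun j => le_max_right _ _)
      (fun j => max_le (le_abs_self _) (abs_nonneg _))
  have hQs : Summable fun j => max (-(x j)) 0 :=
    hsum.of_nonneg_of_le (fun j => le_max_right _ _)
      (fun j => max_le (neg_le_abs _) (abs_nonneg _))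
  have hPQ : P + Q = ‖x‖ := by
    rw [norm_eq_tsum, ← Summable.tsum_add hPs hQs]
    refine tsum_congr fun j => ?_
    rcases le_total 0 (x j) with h | h
    · rw [max_eq_left h, max_eq_right (neg_nonpos.2 h), abs_of_nonneg h, add_zero]
    · rw [max_eq_right h, max_eq_left (neg_nonneg.2 h), abs_of_nonpos h, zero_add]
  have hQ0 : 0 ≤ Q := tsum_nonneg fun j => le_max_right _ _
  have hP0 : 0 ≤ P := tsum_nonneg fun j => le_max_right _ _
  refine ⟨(P - Q)/2, ?_⟩
  rw [cnorm]
  refine lp.norm_le_of_forall_le (by norm_num) fun k => ?_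
  rw [Real.norm_eq_abs, sub_apply, hσ x k, smul_oneC_apply]
  set S := ∑ j ∈ Finset.range (k+1), x j with hS
  have hSP : S ≤ P :=
    (Finset.sum_le_sum fun j _ => le_max_left (x j) 0).trans
      (Summable.sum_le_tsum _ (fun j _ => le_max_right _ _) hPs)
  have hSQ : -Q ≤ S := by
    have h1 : -S = ∑ j ∈ Finset.range (k+1), -(x j) := by simp [hS]
    have h2 : -S ≤ Q := by
      rw [h1]
      exact (Finset.sum_le_sum fun j _ => le_max_left (-(x j)) 0).trans
        (Summable.sum_le_tsum _ (fun j _ => le_max_right _ _) hQs)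
    linarith
  have h1 : P + Q ≤ 1 := hPQ ▸ hx
  rw [abs_le]
  constructor <;> linarith

set_option maxHeartbeats 1000000 in
set_option synthInstance.maxHeartbeats 400000 in
open Filter in
lemma lower_bound (hσ : IsSummation σ) (N : Submodule ℝ cSpace)
    [FiniteDimensional ℝ N] {ε : ℝ} (hε : 0 < ε) :
    ∃ j : ℕ, ∀ y ∈ N, 1/2 - ε ≤ ‖σ (e j) - y‖ := by
  classical
  set δ := ε/4 with hδ
  have hδ0 : 0 < δ := by positivity
  have hLex : ∀ y : cSpace, ∃ L, Tendsto (fun k => (y : ellInf) k) atTop (nhds L) :=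
    fun y => y.2
  choose Lf hLf using hLex
  have hb1 : ∀ (y : cSpace) (j : ℕ), |1 - Lf y| ≤ ‖σ (e j) - y‖ := by
    intro y j
    have h1 : Tendsto (fun k => (↑(σ (e j)) : ellInf) k) atTop (nhds 1) := by
      apply Tendsto.congr' _ (tendsto_const_nhds : Tendsto (fun _ : ℕ => (1:ℝ)) atTop _)
      filter_upwards [eventually_ge_atTop j] with k hk
      simp [sigma_e_apply hσ j k, hk]
    have ht : Tendsto (fun k => |(↑(σ (e j)) : ellInf) k - (y : ellInf) k|) atTop
        (nhds |1 - Lf y|) := (h1.sub (hLf y)).abs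
    refine le_of_tendsto ht (Eventually.of_forall fun k => ?_)
    have := apply_le_cnorm (σ (e j) - y) k
    rwa [sub_apply] at this
  have hb2 : ∀ (y : cSpace) (j k : ℕ), k < j → |(y : ellInf) k| ≤ ‖σ (e j) - y‖ := by
    intro y j k hk
    have := apply_le_cnorm (σ (e j) - y) k
    rwa [sub_apply, sigma_e_apply hσ, if_neg (by omega), zero_sub, abs_neg] at this
  have hkex : ∀ y : cSpace, ∃ k, |Lf y| - δ < |(y : ellInf) k| := by
    intro y
    exact (((hLf y).abs).eventually
      (eventually_gt_nhds (show |Lf y| - δ < |Lf y| by linarith))).exists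
  choose kf hkf using hkex
  set K : Set cSpace := ((↑) : N → cSpace) '' Metric.closedBall 0 2 with hKdef
  have hK : IsCompact K :=
    (isCompact_closedBall (0:N) 2).image continuous_subtype_val
  obtain ⟨t, ht⟩ := hK.elim_finite_subcover (fun y : cSpace => Metric.ball y δ)
    (fun _ => Metric.isOpen_ball)
    (fun y _ => Set.mem_iUnion.2 ⟨y, Metric.mem_ball_self hδ0⟩)
  refine ⟨(t.sup kf) + 1, ?_⟩
  set j := (t.sup kf) + 1 with hj
  intro y hyN
  have hσe1 : ‖σ (e j)‖ ≤ 1 := (norm_sigma_le hσ (e j)).trans_eq (norm_e j)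
  by_cases hy2 : ‖y‖ ≤ 2
  · have hyK : y ∈ K := ⟨⟨y, hyN⟩, by
      rw [Metric.mem_closedBall, dist_zero_right]; exact hy2, rfl⟩
    have hmem := ht hyK
    rw [Set.mem_iUnion₂] at hmem
    obtain ⟨z, hzt, hyz⟩ := hmem
    have hd : ‖y - z‖ < δ := by rwa [Metric.mem_ball, dist_eq_norm] at hyz
    have h1 : |(z : ellInf) (kf z)| - |(y : ellInf) (kf z)| ≤ δ := by
      have h2 := abs_sub_abs_le_abs_sub ((z : ellInf) (kf z)) ((y : ellInf) (kf z))
      have h3 : |(z : ellInf) (kf z) - (y : ellInf) (kf z)| ≤ ‖z - y‖ := by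
        have := apply_le_cnorm (z - y) (kf z)
        rwa [sub_apply] at this
      rw [norm_sub_rev] at h3
      linarith
    have hLyz : |Lf y| - |Lf z| ≤ δ := by
      have h2 := abs_lim_sub_le y z (hLf y) (hLf z)
      have h3 := abs_sub_abs_le_abs_sub (Lf y) (Lf z)
      linarith
    have hkz : kf z < j := Nat.lt_succ_of_le (Finset.le_sup hzt)
    have hA : |Lf y| - 3*δ ≤ ‖σ (e j) - y‖ := by
      have hh1 := hb2 y j (kf z) hkz
      have hh2 := hkf z
      linarith
    have hB := hb1 y j
    have habs : (1:ℝ) ≤ |Lf y| + |1 - Lf y| := by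
      have := abs_add_le (Lf y) (1 - Lf y)
      simpa using this
    by_cases hc : 1/2 ≤ |1 - Lf y|
    · linarith
    · have : 1/2 ≤ |Lf y| := by linarith
      linarith
  · have h1 : ‖y‖ - ‖σ (e j)‖ ≤ ‖σ (e j) - y‖ := by
      have h2 := norm_sub_norm_le y (σ (e j))
      rw [norm_sub_rev] at h2
      linarith [h2]
    linarith [not_le.1 hy2]

end KNS

open KNS in
set_option maxHeartbeats 1000000 in
set_option synthInstance.maxHeartbeats 400000 in
/-- The `n`-th Kolmogorov number of the summation operator `σ : ℓ¹ → c`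
equals `1/2` for `n ≥ 2`. -/
theorem kolmogorov_number_summation (n : ℕ) (hn : 2 ≤ n)
    (σ : ell1 →L[ℝ] cSpace) (hσ : IsSummation σ) :
    sInf {r : ℝ | ∃ N : Submodule ℝ cSpace, Module.rank ℝ N < (n : Cardinal) ∧
        r = sSup {s : ℝ | ∃ x : ell1, ‖x‖ ≤ 1 ∧
          s = sInf {d : ℝ | ∃ y ∈ N, d = ‖σ x - y‖}}} = 1 / 2 := by
  classical
  set T := {r : ℝ | ∃ N : Submodule ℝ cSpace, Module.rank ℝ N < (n : Cardinal) ∧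
      r = sSup {s : ℝ | ∃ x : ell1, ‖x‖ ≤ 1 ∧
        s = sInf {d : ℝ | ∃ y ∈ N, d = ‖σ x - y‖}}} with hT
  have hbddD : ∀ (N : Submodule ℝ cSpace) (x : ell1),
      BddBelow {d : ℝ | ∃ y ∈ N, d = ‖σ x - y‖} :=
    fun N x => ⟨0, by rintro d ⟨y, -, rfl⟩; exact norm_nonneg _⟩
  have hSne : ∀ N : Submodule ℝ cSpace,
      Set.Nonempty {s : ℝ | ∃ x : ell1, ‖x‖ ≤ 1 ∧
        s = sInf {d : ℝ | ∃ y ∈ N, d = ‖σ x - y‖}} :=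
    fun N => ⟨_, 0, by simp, rfl⟩
  have hSbdd : ∀ N : Submodule ℝ cSpace,
      BddAbove {s : ℝ | ∃ x : ell1, ‖x‖ ≤ 1 ∧
        s = sInf {d : ℝ | ∃ y ∈ N, d = ‖σ x - y‖}} := by
    intro N
    refine ⟨1, ?_⟩
    rintro s ⟨x, hx, rfl⟩
    refine (csInf_le (hbddD N x) ⟨0, N.zero_mem, rfl⟩).trans ?_
    rw [sub_zero]
    exact (norm_sigma_le hσ x).trans hx
  have step1 : ∀ r ∈ T, 1/2 ≤ r := by
    rintro r ⟨N, hrank, rfl⟩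
    haveI hfin : FiniteDimensional ℝ N := by
      exact (Module.rank_lt_aleph0_iff (R := ℝ) (M := ↥N)).mp (hrank.trans (Cardinal.nat_lt_aleph0 n))
    refine le_of_forall_sub_le fun ε hε => ?_
    obtain ⟨j, hj⟩ := lower_bound hσ N hε
    have hmem : sInf {d : ℝ | ∃ y ∈ N, d = ‖σ (e j) - y‖} ∈
        {s : ℝ | ∃ x : ell1, ‖x‖ ≤ 1 ∧
          s = sInf {d : ℝ | ∃ y ∈ N, d = ‖σ x - y‖}} :=
      ⟨e j, by rw [norm_e], rfl⟩
    have hge : 1/2 - ε ≤ sInf {d : ℝ | ∃ y ∈ N, d = ‖σ (e j) - y‖} :=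
      le_csInf ⟨_, 0, N.zero_mem, rfl⟩ (by rintro d ⟨y, hy, rfl⟩; exact hj y hy)
    exact hge.trans (le_csSup (hSbdd N) hmem)
  set N0 : Submodule ℝ cSpace := Submodule.span ℝ {oneC} with hN0
  have hrank0 : Module.rank ℝ N0 < (n : Cardinal) := by
    refine lt_of_le_of_lt (rank_span_le _) ?_
    rw [Cardinal.mk_singleton]
    exact_mod_cast Nat.lt_of_lt_of_le one_lt_two hn
  have hr0mem : sSup {s : ℝ | ∃ x : ell1, ‖x‖ ≤ 1 ∧
      s = sInf {d : ℝ | ∃ y ∈ N0, d = ‖σ x - y‖}} ∈ T := ⟨N0, hrank0, rfl⟩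
  have hr0le : sSup {s : ℝ | ∃ x : ell1, ‖x‖ ≤ 1 ∧
      s = sInf {d : ℝ | ∃ y ∈ N0, d = ‖σ x - y‖}} ≤ 1/2 := by
    refine csSup_le (hSne N0) ?_
    rintro s ⟨x, hx, rfl⟩
    obtain ⟨c, hc⟩ := upper_bound hσ x hx
    refine (csInf_le (hbddD N0 x) ⟨c • oneC, ?_, rfl⟩).trans hc
    exact Submodule.smul_mem _ c (Submodule.subset_span rfl)
  have hbddT : BddBelow T := ⟨1/2, step1⟩
  refine le_antisymm ((csInf_le hbddT hr0mem).trans hr0le) (le_csInf ⟨_, hr0mem⟩ step1)
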